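/- Let G be a finite connected simple graph with vertex set V and at least one edge. For a spanning tree T of G, let H_T be the loose graph obtained from G by resolving every edge of G not belonging to T: its completion Ĥ_T has vertex set V ⊔ { (e,u) : e ∈ E(G) ∖ E(T), u an endpoint of e }, edge set E(T) ∪ { {u,(e,u)} : e ∈ E(G) ∖ E(T), u an endpoint of e }, and vertex subset S = V. Then Ĥ_T is a tree, and for any two spanning trees T₁ and T₂ of G and every finite field k, the numbers of k-rational points coincide: |X_{H_{T₁}}(k)| = |X_{H_{T₂}}(k)|. (This is the point-count version of the paper's proposition that the Grothendieck polynomial of F(T̄) is independent of the choice of the spanning loose tree.) -/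

import Mathlib

/-- The local affine chart `A_v^H(k)` of the vertex `v` of the graph `H`. -/
def looseChart {V : Type} (H : SimpleGraph V) (k : Type) [Field k] (v : V) :
    Set (Projectivization k (V → k)) :=
  {p | (∀ w, w ∉ insert v (H.neighborSet v) → p.rep w = 0) ∧ p.rep v ≠ 0}

/-- Given a graph `G` and a spanning tree `T` of `G`, the completion `Ĥ_T` of
the loose graph obtained from `G` by resolving every edge of `G` not in `T`:
its vertices are `V ⊔ {(e,u) : e ∈ E(G) ∖ E(T), u an endpoint of e}` (a
non-tree edge `{u,v}` giving the two new pendant vertices `(u,v)` attached to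
`u` and `(v,u)` attached to `v`), and its edges are those of `T` together with
the pendant edges `{u, (e,u)}`. -/
def spanningResolution {V : Type} (G T : SimpleGraph V) :
    SimpleGraph (V ⊕ {p : V × V // G.Adj p.1 p.2 ∧ ¬T.Adj p.1 p.2}) where
  Adj a b :=
    match a, b with
    | Sum.inl a, Sum.inl b => T.Adj a b
    | Sum.inl a, Sum.inr p => a = p.1.1
    | Sum.inr p, Sum.inl a => a = p.1.1
    | Sum.inr _, Sum.inr _ => False
  symm := ⟨by
    rintro (a | p) (b | q) h
    · exact T.adj_symm h
    · exact h
    · exact h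
    · exact h⟩
  loopless := ⟨by
    rintro (a | p) h
    · exact T.irrefl h
    · exact h⟩

/-! ### Auxiliary lemmas -/

instance {k M : Type} [DivisionRing k] [AddCommGroup M] [Module k M] [Finite M] :
    Finite (Projectivization k M) :=
  inferInstanceAs (Finite (Quotient _))

lemma exists_rep_mk_smul {k W : Type} [Field k] (x : W → k) (hx : x ≠ 0) :
    ∃ a : kˣ, (Projectivization.mk k x hx).rep = a • x := by
  have h := Projectivization.mk_rep (Projectivization.mk k x hx)
  rw [Projectivization.mk_eq_mk_iff] at h
  obtain ⟨a, ha⟩ := h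
  exact ⟨a, ha.symm⟩

variable {W k : Type} [Field k]

open scoped Classical

/-- normalized vector for chart membership -/
noncomputable def chartFun (H : SimpleGraph W) (v : W) (f : H.neighborSet v → k) : W → k :=
  fun w => if h : w ∈ H.neighborSet v then f ⟨w, h⟩ else if w = v then 1 else 0

lemma chartFun_v (H : SimpleGraph W) (v : W) (f : H.neighborSet v → k) : chartFun H v f v = 1 := by
  simp [chartFun, H.notMem_neighborSet_self]

lemma chartFun_nbr (H : SimpleGraph W) (v : W) (f : H.neighborSet v → k) {w : W}
    (h : w ∈ H.neighborSet v) : chartFun H v f w = f ⟨w, h⟩ := by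
  simp [chartFun, h]

lemma chartFun_zero (H : SimpleGraph W) (v : W) (f : H.neighborSet v → k) {w : W}
    (h : w ∉ insert v (H.neighborSet v)) : chartFun H v f w = 0 := by
  simp only [Set.mem_insert_iff, not_or] at h
  simp [chartFun, h.1, h.2]

lemma chartFun_ne_zero (H : SimpleGraph W) (v : W) (f : H.neighborSet v → k) :
    chartFun H v f ≠ 0 := by
  intro h
  have := congrFun h v
  rw [chartFun_v] at this
  simpa using this

noncomputable def looseChartEquiv (H : SimpleGraph W) (v : W) :
    looseChart H k v ≃ (H.neighborSet v → k) where
  toFun p := fun w => (p.1.rep v)⁻¹ * p.1.rep w.1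
  invFun f := ⟨Projectivization.mk k (chartFun H v f) (chartFun_ne_zero H v f), by
    obtain ⟨a, ha⟩ := exists_rep_mk_smul (chartFun H v f) (chartFun_ne_zero H v f)
    constructor
    · intro w hw
      rw [ha]
      simp [chartFun_zero H v f hw]
    · rw [ha]
      simp [chartFun_v, Units.smul_def, Units.ne_zero]⟩
  left_inv := by
    rintro ⟨p, hp1, hp2⟩
    ext1
    dsimp only
    conv_rhs => rw [← Projectivization.mk_rep p]
    rw [Projectivization.mk_eq_mk_iff']
    refine ⟨(p.rep v)⁻¹, ?_⟩
    funext w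
    by_cases hw : w ∈ H.neighborSet v
    · rw [chartFun_nbr H v _ hw]
      simp
    · by_cases hwv : w = v
      · subst hwv
        rw [chartFun_v]
        simp [inv_mul_cancel₀ hp2]
      · have : w ∉ insert v (H.neighborSet v) := by simp [hwv, hw]
        rw [chartFun_zero H v _ this]
        simp [hp1 w this]
  right_inv := by
    intro f
    funext w
    dsimp only
    obtain ⟨a, ha⟩ := exists_rep_mk_smul (chartFun H v f) (chartFun_ne_zero H v f)
    rw [ha]
    simp only [Pi.smul_apply, Units.smul_def, smul_eq_mul, chartFun_v]
    rw [chartFun_nbr H v f w.2, mul_one]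
    rw [mul_comm (a : k) (f ⟨w.1, w.2⟩)]  -- maybe not needed
    field_simp

lemma looseChart_card (H : SimpleGraph W) (v : W) [Finite k] [Finite W] :
    (looseChart H k v).ncard = (Nat.card k) ^ (H.neighborSet v).ncard := by
  rw [← Nat.card_coe_set_eq, Nat.card_congr (looseChartEquiv H v), Nat.card_fun,
    Nat.card_coe_set_eq]

/-- vector supported on a pair -/
noncomputable def pairFun (v w : W) (c : kˣ) : W → k :=
  fun u => if u = v then 1 else if u = w then (c : k) else 0

lemma pairFun_v (v w : W) (hvw : v ≠ w) (c : kˣ) : pairFun v w c v = 1 := by simp [pairFun]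

lemma pairFun_w (v w : W) (hvw : v ≠ w) (c : kˣ) : pairFun v w c w = (c : k) := by
  simp [pairFun, hvw.symm]

lemma pairFun_zero (v w : W) (c : kˣ) {u : W} (h1 : u ≠ v) (h2 : u ≠ w) :
    pairFun v w c u = 0 := by simp [pairFun, h1, h2]

lemma pairFun_ne_zero (v w : W) (hvw : v ≠ w) (c : kˣ) : pairFun v w c ≠ 0 := by
  intro h
  have := congrFun h v
  rw [pairFun_v v w hvw] at this
  simpa using this

/-- In a chart intersection of adjacent vertices with no common neighbour,
the support of a point is contained in the pair. -/
lemma rep_eq_zero_of_mem_pair (H : SimpleGraph W) {v w : W}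
    (hcom : ∀ x, H.Adj v x → H.Adj w x → False)
    {p : Projectivization k (W → k)} (hp : p ∈ looseChart H k v ∩ looseChart H k w)
    {u : W} (h1 : u ≠ v) (h2 : u ≠ w) : p.rep u = 0 := by
  by_contra h
  have hv : u ∈ insert v (H.neighborSet v) := by
    by_contra hc; exact h (hp.1.1 u hc)
  have hw : u ∈ insert w (H.neighborSet w) := by
    by_contra hc; exact h (hp.2.1 u hc)
  simp only [Set.mem_insert_iff, SimpleGraph.mem_neighborSet] at hv hw
  rcases hv with rfl | hv
  · exact h1 rfl
  rcases hw with rfl | hw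
  · exact h2 rfl
  exact hcom u hv hw

noncomputable def pairEquiv (H : SimpleGraph W) {v w : W} (hadj : H.Adj v w)
    (hcom : ∀ x, H.Adj v x → H.Adj w x → False) :
    (looseChart H k v ∩ looseChart H k w : Set (Projectivization k (W → k))) ≃ kˣ where
  toFun p := Units.mk0 ((p.1.rep v)⁻¹ * p.1.rep w)
    (mul_ne_zero (inv_ne_zero p.2.1.2) p.2.2.2)
  invFun c := ⟨Projectivization.mk k (pairFun v w c) (pairFun_ne_zero v w hadj.ne c), by
    obtain ⟨a, ha⟩ := exists_rep_mk_smul (pairFun v w c) (pairFun_ne_zero v w hadj.ne c)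
    have hvmem : v ∈ insert v (H.neighborSet v) := Set.mem_insert _ _
    refine ⟨⟨?_, ?_⟩, ⟨?_, ?_⟩⟩
    · intro u hu
      simp only [Set.mem_insert_iff, SimpleGraph.mem_neighborSet, not_or] at hu
      have h2 : u ≠ w := by rintro rfl; exact hu.2 hadj
      rw [ha]
      simp [pairFun_zero v w c hu.1 h2]
    · rw [ha]
      simp [pairFun_v v w hadj.ne, Units.smul_def, Units.ne_zero]
    · intro u hu
      simp only [Set.mem_insert_iff, SimpleGraph.mem_neighborSet, not_or] at hu
      have h1 : u ≠ v := by rintro rfl; exact hu.2 hadj.symm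
      rw [ha]
      simp [pairFun_zero v w c h1 hu.1]
    · rw [ha]
      simp [pairFun_w v w hadj.ne, Units.smul_def, Units.ne_zero]⟩
  left_inv := by
    rintro ⟨p, hp⟩
    ext1
    dsimp only
    conv_rhs => rw [← Projectivization.mk_rep p]
    rw [Projectivization.mk_eq_mk_iff']
    refine ⟨(p.rep v)⁻¹, ?_⟩
    funext u
    by_cases h1 : u = v
    · rw [h1, pairFun_v v w hadj.ne]
      simp [inv_mul_cancel₀ hp.1.2]
    · by_cases h2 : u = w
      · rw [h2, pairFun_w v w hadj.ne]
        simp [Units.val_mk0]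
      · rw [pairFun_zero v w _ h1 h2]
        simp [rep_eq_zero_of_mem_pair H hcom hp h1 h2]
  right_inv := by
    intro c
    ext
    dsimp only
    obtain ⟨a, ha⟩ := exists_rep_mk_smul (pairFun v w c) (pairFun_ne_zero v w hadj.ne c)
    rw [Units.val_mk0, ha]
    simp only [Pi.smul_apply, Units.smul_def, smul_eq_mul,
      pairFun_v v w hadj.ne, pairFun_w v w hadj.ne, mul_one]
    field_simp

lemma looseChart_inter_card (H : SimpleGraph W) {v w : W} (hadj : H.Adj v w)
    (hcom : ∀ x, H.Adj v x → H.Adj w x → False) :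
    (looseChart H k v ∩ looseChart H k w).ncard = Nat.card kˣ := by
  rw [← Nat.card_coe_set_eq, Nat.card_congr (pairEquiv H hadj hcom)]

lemma looseChart_inter_empty (H : SimpleGraph W) {v w : W} (hne : v ≠ w)
    (hnadj : ¬H.Adj v w) :
    looseChart H k v ∩ looseChart H k w = ∅ := by
  ext p
  simp only [Set.mem_inter_iff, Set.mem_empty_iff_false, iff_false]
  rintro ⟨hp1, hp2⟩
  have : w ∉ insert v (H.neighborSet v) := by
    simp [hne.symm, hnadj]
  exact hp2.2 (hp1.1 w this)

lemma looseChart_triple_empty (H : SimpleGraph W) {v w u : W} (hvw : v ≠ w) (hvu : v ≠ u)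
    (hwu : w ≠ u) (hcom : H.Adj v w → ∀ x, H.Adj v x → H.Adj w x → False) :
    looseChart H k v ∩ looseChart H k w ∩ looseChart H k u = ∅ := by
  by_cases hadj : H.Adj v w
  · ext p
    simp only [Set.mem_inter_iff, Set.mem_empty_iff_false, iff_false]
    rintro ⟨hp12, hp3⟩
    exact hp3.2 (rep_eq_zero_of_mem_pair H (hcom hadj) hp12 hvu.symm hwu.symm)
  · rw [looseChart_inter_empty H hvw hadj, Set.empty_inter]

lemma ncard_biUnion_of_disjoint {α ι : Type} [Finite α] (s : Finset ι) (A : ι → Set α)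
    (hdisj : ∀ i ∈ s, ∀ j ∈ s, i ≠ j → A i ∩ A j = ∅) :
    (⋃ i ∈ s, A i).ncard = ∑ i ∈ s, (A i).ncard := by
  classical
  induction s using Finset.induction with
  | empty => simp
  | @insert a s ha ih =>
    rw [Finset.sum_insert ha, Finset.set_biUnion_insert]
    rw [Set.ncard_union_eq ?_ (Set.toFinite _) (Set.toFinite _)]
    · rw [ih (fun i hi j hj hij => hdisj i (Finset.mem_insert_of_mem hi)
        j (Finset.mem_insert_of_mem hj) hij)]
    · rw [Set.disjoint_left]
      intro x hx hx'
      simp only [Set.mem_iUnion] at hx'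
      obtain ⟨i, hi, hxi⟩ := hx'
      have : x ∈ A a ∩ A i := ⟨hx, hxi⟩
      rw [hdisj a (Finset.mem_insert_self a s) i (Finset.mem_insert_of_mem hi)
        (by rintro rfl; exact ha hi)] at this
      exact this

lemma two_mul_ncard_biUnion {α ι : Type} [Finite α] (s : Finset ι) (A : ι → Set α)
    (h3 : ∀ i ∈ s, ∀ j ∈ s, ∀ l ∈ s, i ≠ j → i ≠ l → j ≠ l → A i ∩ A j ∩ A l = ∅) :
    2 * (⋃ i ∈ s, A i).ncard + ∑ p ∈ s.offDiag, (A p.1 ∩ A p.2).ncard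
      = 2 * ∑ i ∈ s, (A i).ncard := by
  classical
  induction s using Finset.induction with
  | empty => simp
  | @insert a s ha ih =>
    have hmem : ∀ i ∈ s, i ∈ insert a s := fun i hi => Finset.mem_insert_of_mem hi
    have hamem : a ∈ insert a s := Finset.mem_insert_self a s
    have hU : (A a ∪ ⋃ i ∈ s, A i).ncard + (A a ∩ ⋃ i ∈ s, A i).ncard
        = (A a).ncard + (⋃ i ∈ s, A i).ncard :=
      Set.ncard_union_add_ncard_inter _ _ (Set.toFinite _) (Set.toFinite _)
    have hAU : A a ∩ ⋃ i ∈ s, A i = ⋃ i ∈ s, (A a ∩ A i) := by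
      rw [Set.inter_iUnion₂]
    have hsum : (A a ∩ ⋃ i ∈ s, A i).ncard = ∑ i ∈ s, (A a ∩ A i).ncard := by
      rw [hAU]
      refine ncard_biUnion_of_disjoint s _ ?_
      intro i hi j hj hij
      have h := h3 a hamem i (hmem i hi) j (hmem j hj)
        (by rintro rfl; exact ha hi) (by rintro rfl; exact ha hj) hij
      rw [Set.eq_empty_iff_forall_notMem] at h ⊢
      rintro x ⟨⟨hxa, hxi⟩, ⟨-, hxj⟩⟩
      exact h x ⟨⟨hxa, hxi⟩, hxj⟩
    have hoff : (insert a s).offDiag = s.offDiag ∪ {a} ×ˢ s ∪ s ×ˢ {a} :=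
      Finset.offDiag_insert ha
    have hd1 : Disjoint (s.offDiag ∪ {a} ×ˢ s) (s ×ˢ {a}) := by
      rw [Finset.disjoint_left]
      rintro ⟨x, y⟩ hx hy
      simp only [Finset.mem_union, Finset.mem_offDiag, Finset.mem_product,
        Finset.mem_singleton] at hx hy
      rcases hx with ⟨-, hx2, -⟩ | ⟨hx1, -⟩
      · exact ha (hy.2 ▸ hx2)
      · exact ha (hx1 ▸ hy.1)
    have hd2 : Disjoint s.offDiag ({a} ×ˢ s) := by
      rw [Finset.disjoint_left]
      rintro ⟨x, y⟩ hx hy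
      simp only [Finset.mem_offDiag, Finset.mem_product, Finset.mem_singleton] at hx hy
      exact ha (hy.1 ▸ hx.1)
    have hsum2 : ∑ p ∈ ({a} ×ˢ s : Finset (ι × ι)), (A p.1 ∩ A p.2).ncard
        = ∑ i ∈ s, (A a ∩ A i).ncard := by
      rw [Finset.sum_product, Finset.sum_singleton]
    have hsum3 : ∑ p ∈ (s ×ˢ ({a} : Finset ι)), (A p.1 ∩ A p.2).ncard
        = ∑ i ∈ s, (A a ∩ A i).ncard := by
      rw [Finset.sum_product]
      simp [Set.inter_comm]
    have IH := ih (fun i hi j hj l hl => h3 i (hmem i hi) j (hmem j hj) l (hmem l hl))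
    rw [Finset.sum_insert ha, Finset.set_biUnion_insert, hoff, Finset.sum_union hd1,
      Finset.sum_union hd2, hsum2, hsum3]
    omega

section Resolution

variable {V : Type} {G T : SimpleGraph V}

lemma res_adj_inl_inl {a b : V} :
    (spanningResolution G T).Adj (Sum.inl a) (Sum.inl b) ↔ T.Adj a b := Iff.rfl

lemma res_adj_inl_inr {a : V} {p} :
    (spanningResolution G T).Adj (Sum.inl a) (Sum.inr p) ↔ a = p.1.1 := Iff.rfl

lemma res_adj_inr {p} {x} (h : (spanningResolution G T).Adj (Sum.inr p) x) :
    x = Sum.inl p.1.1 := by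
  cases x with
  | inl a => rw [show a = p.1.1 from h]
  | inr q => exact absurd h (by simp [spanningResolution])

def resHom (G T : SimpleGraph V) : T →g spanningResolution G T :=
  ⟨Sum.inl, fun {a b} h => h⟩

lemma res_connected (hle : T ≤ G) (hT : T.IsTree) :
    (spanningResolution G T).Connected := by
  have hne : Nonempty V := hT.isConnected.nonempty
  have hreach : ∀ x : V ⊕ {p : V × V // G.Adj p.1 p.2 ∧ ¬T.Adj p.1 p.2},
      ∃ a : V, (spanningResolution G T).Reachable x (Sum.inl a) := by
    rintro (a | p)
    · exact ⟨a, .refl _⟩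
    · exact ⟨p.1.1, SimpleGraph.Adj.reachable (by exact rfl)⟩
  constructor
  intro x y
  obtain ⟨a, hxa⟩ := hreach x
  obtain ⟨b, hyb⟩ := hreach y
  exact hxa.trans (((hT.isConnected.preconnected a b).map (resHom G T)).trans hyb.symm)

lemma exists_last_edge {α : Type} {H : SimpleGraph α} {x y : α} (q : H.Walk x y) (hxy : x ≠ y) :
    ∃ u, H.Adj u y ∧ s(u, y) ∈ q.edges := by
  induction q with
  | nil => exact absurd rfl hxy
  | @cons a b c h q ih =>
    by_cases hbc : b = c
    · subst hbc; exact ⟨a, h, by simp⟩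
    · obtain ⟨u, hu, hmem⟩ := ih hbc
      exact ⟨u, hu, by simp [hmem]⟩

lemma pendant_mem_support {x y} (c : (spanningResolution G T).Walk x y) (hc : c.IsTrail)
    {p} (hp : Sum.inr p ∈ c.support) : x = Sum.inr p ∨ y = Sum.inr p := by
  induction c with
  | nil => simp at hp; exact Or.inl hp.symm
  | @cons a z y h q ih =>
    rw [SimpleGraph.Walk.isTrail_cons] at hc
    rw [SimpleGraph.Walk.support_cons, List.mem_cons] at hp
    rcases hp with hp | hp
    · exact Or.inl hp.symm
    rcases ih hc.1 hp with rfl | hy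
    · -- z = inr p; first edge goes from a to inr p, so a = inl p.1.1
      have ha : a = Sum.inl p.1.1 := res_adj_inr ((spanningResolution G T).adj_symm h)
      subst ha
      -- q : Walk (inr p) y
      cases q with
      | nil => exact Or.inr rfl
      | @cons _ w _ h' q' =>
        have hw : w = Sum.inl p.1.1 := res_adj_inr h'
        subst hw
        exfalso
        apply hc.2
        rw [SimpleGraph.Walk.edges_cons, Sym2.eq_swap]
        exact List.mem_cons_self
    · exact Or.inr hy

lemma lift_walk :
    ∀ {x y} (c : (spanningResolution G T).Walk x y)
      (_ : ∀ u ∈ c.support, ∃ v : V, u = Sum.inl v) (a b : V) (hx : x = Sum.inl a)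
      (hy : y = Sum.inl b),
      ∃ w : T.Walk a b, w.map (resHom G T) = c.copy hx hy := by
  intro x y c
  induction c with
  | nil =>
    intro hsupp a b hx hy
    obtain rfl : a = b := Sum.inl.inj (hx.symm.trans hy)
    subst hx
    exact ⟨.nil, by simp; rfl⟩
  | @cons x z y h q ih =>
    intro hsupp a b hx hy
    subst hx
    subst hy
    have hz : ∃ v : V, z = Sum.inl v := hsupp z (by
      rw [SimpleGraph.Walk.support_cons]
      exact List.mem_cons_of_mem _ q.start_mem_support)
    obtain ⟨b', rfl⟩ := hz
    have hsupp' : ∀ u ∈ q.support, ∃ v : V, u = Sum.inl v := fun u hu =>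
      hsupp u (by rw [SimpleGraph.Walk.support_cons]; exact List.mem_cons_of_mem _ hu)
    obtain ⟨w', hw'⟩ := ih hsupp' b' b rfl rfl
    refine ⟨.cons (res_adj_inl_inl.mp h) w', ?_⟩
    rw [SimpleGraph.Walk.map_cons, hw']
    simp
    rfl

lemma res_acyclic (hT : T.IsTree) : (spanningResolution G T).IsAcyclic := by
  intro x c hc
  cases x with
  | inr p =>
    cases c with
    | nil => exact hc.ne_nil rfl
    | @cons _ z _ h q =>
      rw [SimpleGraph.Walk.cons_isCycle_iff] at hc
      have hz : z = Sum.inl p.1.1 := res_adj_inr h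
      subst hz
      obtain ⟨u, hu, hmem⟩ := exists_last_edge q (by simp)
      have hu' : u = Sum.inl p.1.1 := res_adj_inr ((spanningResolution G T).adj_symm hu)
      subst hu'
      exact hc.2 (by rwa [Sym2.eq_swap] at hmem)
  | inl a =>
    have hsupp : ∀ u ∈ c.support, ∃ v : V, u = Sum.inl v := by
      intro u hu
      cases u with
      | inl v => exact ⟨v, rfl⟩
      | inr p =>
        rcases pendant_mem_support c hc.isTrail hu with h | h <;> simp at h
    obtain ⟨w, hw⟩ := lift_walk c hsupp a a rfl rfl
    rw [SimpleGraph.Walk.copy_rfl_rfl] at hw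
    have : w.IsCycle := by
      rw [← SimpleGraph.Walk.map_isCycle_iff_of_injective (f := resHom G T)
        Sum.inl_injective]
      rwa [hw]
    exact hT.IsAcyclic w this

lemma res_isTree (hle : T ≤ G) (hT : T.IsTree) : (spanningResolution G T).IsTree :=
  ⟨res_connected hle hT, res_acyclic hT⟩

end Resolution


section NB2
open scoped Classical
variable {V : Type} {G T : SimpleGraph V}


noncomputable def resNbhdEquiv (hle : T ≤ G) (v : V) :
    ((spanningResolution G T).neighborSet (Sum.inl v)) ≃ (G.neighborSet v) where
  toFun x :=
    match x with
    | ⟨Sum.inl w, h⟩ => ⟨w, hle h⟩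
    | ⟨Sum.inr p, h⟩ => ⟨p.1.2, by rw [show v = p.1.1 from h]; exact p.2.1⟩
  invFun x :=
    if h : T.Adj v x.1 then ⟨Sum.inl x.1, h⟩
    else ⟨Sum.inr ⟨(v, x.1), x.2, h⟩, rfl⟩
  left_inv := by
    rintro ⟨(w | p), h⟩
    · have h' : T.Adj v w := h
      simp [h']
    · have h' : v = p.1.1 := h
      have hna : ¬T.Adj v p.1.2 := by rw [h']; exact p.2.2
      apply Subtype.ext
      simp only [dif_neg hna]
      exact congrArg Sum.inr (Subtype.ext (Prod.ext h' rfl))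
  right_inv := by
    rintro ⟨w, hw⟩
    by_cases h : T.Adj v w <;> simp [h]

section Tri
variable {V : Type} {G T : SimpleGraph V}

lemma tree_no_triangle (hT : T.IsTree) {v w u : V} (hvw : T.Adj v w) (hvu : T.Adj v u)
    (hwu : T.Adj w u) : False := by
  classical
  have hpath : (SimpleGraph.Walk.cons hvu (.cons hwu.symm .nil) : T.Walk v w).IsPath := by
    simp [SimpleGraph.Walk.isPath_def, hvu.ne, hvw.ne, hwu.ne']
  have := hT.IsAcyclic.path_unique (SimpleGraph.Path.singleton hvw)
    ⟨SimpleGraph.Walk.cons hvu (.cons hwu.symm .nil), hpath⟩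
  have hlen := congrArg (fun q : T.Path v w => q.1.length) this
  simp [SimpleGraph.Path.singleton] at hlen

lemma card_adj_filter (T : SimpleGraph V) [Fintype V] [DecidableEq V] [DecidableRel T.Adj] :
    ((Finset.univ : Finset (V × V)).filter (fun p => T.Adj p.1 p.2)).card
      = 2 * T.edgeFinset.card := by
  rw [← SimpleGraph.dart_card_eq_twice_card_edges, ← Fintype.card_subtype]
  exact Fintype.card_congr
    ⟨fun p => ⟨p.1, p.2⟩, fun d => ⟨d.toProd, d.adj⟩,
     fun p => rfl, fun d => rfl⟩
end Tri

end NB2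

section Key
open scoped Classical

variable {V : Type} [Fintype V] {G T : SimpleGraph V}

lemma res_no_common (hT : T.IsTree) {v w : V}
    (hadj : (spanningResolution G T).Adj (Sum.inl v) (Sum.inl w)) :
    ∀ x, (spanningResolution G T).Adj (Sum.inl v) x →
      (spanningResolution G T).Adj (Sum.inl w) x → False
  | Sum.inl u, h1, h2 => tree_no_triangle hT hadj h1 h2
  | Sum.inr p, h1, h2 => by
      have hvw : v = w := (show v = p.1.1 from h1).trans (show w = p.1.1 from h2).symm
      exact T.irrefl (hvw ▸ (hadj : T.Adj v w))

lemma key_count (hle : T ≤ G) (hT : T.IsTree) (k : Type) [Field k] [Fintype k] :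
    2 * (⋃ v : V, looseChart (spanningResolution G T) k (Sum.inl v)).ncard
      + (2 * (Fintype.card V - 1)) * Nat.card kˣ
      = 2 * ∑ v : V, (Nat.card k) ^ (G.neighborSet v).ncard := by
  classical
  set H := spanningResolution G T with hH
  set A : V → Set (Projectivization k ((V ⊕ {p : V × V // G.Adj p.1 p.2 ∧ ¬T.Adj p.1 p.2}) → k))
    := fun v => looseChart H k (Sum.inl v) with hA
  have h3 : ∀ i ∈ (Finset.univ : Finset V), ∀ j ∈ (Finset.univ : Finset V),
      ∀ l ∈ (Finset.univ : Finset V), i ≠ j → i ≠ l → j ≠ l → A i ∩ A j ∩ A l = ∅ := by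
    intro i _ j _ l _ hij hil hjl
    refine looseChart_triple_empty H (fun h => hij (Sum.inl.inj h))
      (fun h => hil (Sum.inl.inj h)) (fun h => hjl (Sum.inl.inj h)) ?_
    intro hadj
    exact res_no_common hT hadj
  have IE := two_mul_ncard_biUnion (Finset.univ : Finset V) A h3
  have huniv : (⋃ i ∈ (Finset.univ : Finset V), A i) = ⋃ v : V, A v := by
    ext x; simp
  rw [huniv] at IE
  have hsum : ∑ v : V, (A v).ncard = ∑ v : V, (Nat.card k) ^ (G.neighborSet v).ncard := by
    refine Finset.sum_congr rfl fun v _ => ?_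
    rw [hA]
    rw [looseChart_card H (Sum.inl v)]
    congr 1
    rw [← Nat.card_coe_set_eq, ← Nat.card_coe_set_eq]
    exact Nat.card_congr (resNbhdEquiv hle v)
  have hmid : ∑ p ∈ (Finset.univ : Finset V).offDiag, (A p.1 ∩ A p.2).ncard
      = (2 * (Fintype.card V - 1)) * Nat.card kˣ := by
    have step1 : ∑ p ∈ (Finset.univ : Finset V).offDiag, (A p.1 ∩ A p.2).ncard
        = ∑ p ∈ (Finset.univ : Finset V).offDiag,
            (if T.Adj p.1 p.2 then Nat.card kˣ else 0) := by
      refine Finset.sum_congr rfl fun p hp => ?_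
      have hne : p.1 ≠ p.2 := (Finset.mem_offDiag.mp hp).2.2
      by_cases hadj : T.Adj p.1 p.2
      · rw [if_pos hadj, hA]
        exact looseChart_inter_card H (show H.Adj (Sum.inl p.1) (Sum.inl p.2) from hadj)
          (res_no_common hT hadj)
      · rw [if_neg hadj, hA]
        rw [looseChart_inter_empty H (fun h => hne (Sum.inl.inj h))
          (show ¬H.Adj (Sum.inl p.1) (Sum.inl p.2) from hadj)]
        exact Set.ncard_empty _
    rw [step1, ← Finset.sum_filter]
    have hfilter : (Finset.univ : Finset V).offDiag.filter (fun p => T.Adj p.1 p.2)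
        = (Finset.univ : Finset (V × V)).filter (fun p => T.Adj p.1 p.2) := by
      ext p
      simp only [Finset.mem_filter, Finset.mem_offDiag, Finset.mem_univ, true_and]
      exact ⟨fun h => h.2, fun h => ⟨h.ne, h⟩⟩
    rw [hfilter, Finset.sum_const, smul_eq_mul, card_adj_filter T]
    have := hT.card_edgeFinset
    congr 1
    omega
  rw [← hsum, ← hmid]
  exact IE

end Key

/-- For a finite connected graph `G` with at least one edge: for every spanning
tree `T` of `G`, the completion `Ĥ_T` of the loose graph obtained by resolving
all non-tree edges is a tree; and for any two spanning trees `T₁, T₂` of `G`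
and every finite field `k`, the numbers of `k`-rational points of the
associated schemes coincide (the vertex subset being `S = V`). -/
theorem spanning_resolution_tree_and_count_independent {V : Type} [Fintype V]
    (G : SimpleGraph V) (hconn : G.Connected) (hEdge : ∃ a b, G.Adj a b) :
    (∀ T : SimpleGraph V, T ≤ G → T.IsTree → (spanningResolution G T).IsTree) ∧
    (∀ T₁ T₂ : SimpleGraph V, T₁ ≤ G → T₁.IsTree → T₂ ≤ G → T₂.IsTree →
      ∀ (k : Type) [Field k] [Fintype k],
        (⋃ v : V, looseChart (spanningResolution G T₁) k (Sum.inl v)).ncard =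
        (⋃ v : V, looseChart (spanningResolution G T₂) k (Sum.inl v)).ncard) := by
  constructor
  · intro T hle hT
    exact res_isTree hle hT
  · intro T₁ T₂ hle₁ hT₁ hle₂ hT₂ k _ _
    have h1 := key_count hle₁ hT₁ k
    have h2 := key_count hle₂ hT₂ k
    omega
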